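/- Let $p \geq 2$ and suppose $\varrho: (0,\infty) \to [0,\infty)$ satisfies $\varrho(t)t - \varrho(s)s \geq \varrho_*[(t+s)^\delta(1+t+s)^{1-\delta}]^{p-2}(t-s)$ for all $t \geq s > 0$ with $\varrho_* > 0$ and $\delta \in [0,1]$. Then there exists $\alpha > 0$ such that for all $x, y \in \mathbb{R}^d$: $(\varrho(|x|)x - \varrho(|y|)y) \cdot (x - y) \geq \alpha |x - y|^p$. -/

import Mathlib

private lemma nonlinearity_aux_final (ϱt ϱs M K t s c ρ : ℝ) (hK : 0 < K) (hK1 : 1 ≤ K)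
    (hM0 : 0 ≤ M) (hρ : 0 < ρ) (hts : s ≤ t) (hcle : c ≤ t * s)
    (h1' : ρ * M * (t-s) * (t-s) ≤ (ϱt * t - ϱs * s) * (t-s))
    (e2' : ρ / 2 * (M / K * 4) ≤ ϱt)
    (h3' : (0:ℝ) ≤ ϱs * (t*s - c)) :
    ρ / K * (M * (t^2 - 2*c + s^2)) ≤ ϱt * t ^ 2 + ϱs * s ^ 2 - (ϱt + ϱs) * c := by
  rw [div_mul_eq_mul_div, div_le_iff₀ hK]
  have e2K : 2 * ρ * M ≤ ϱt * K := by
    have h := mul_le_mul_of_nonneg_right e2' hK.le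
    have heq : ρ / 2 * (M / K * 4) * K = 2 * ρ * M := by field_simp; ring
    linarith [heq ▸ h]
  have h2c := mul_le_mul_of_nonneg_right e2K (by linarith : (0:ℝ) ≤ t*s - c)
  have h3K := mul_le_mul_of_nonneg_right h3' hK.le
  have hdivnn : 0 ≤ ρ * M * (t-s) * (t-s) :=
    mul_nonneg (mul_nonneg (mul_nonneg hρ.le hM0) (by linarith)) (by linarith)
  have hdivK : ρ * M * (t-s) * (t-s) ≤ ρ * M * (t-s) * (t-s) * K :=
    le_mul_of_one_le_right hdivnn hK1
  have h1K := mul_le_mul_of_nonneg_right h1' hK.le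
  nlinarith [h2c, h3K, hdivK, h1K]

set_option maxHeartbeats 1000000 in
open Classical in

/-- Pointwise uniform monotonicity of the nonlinearity `x ↦ ϱ(|x|)x` (extended by `0`
at the origin) for a function `ϱ` of class `(p,δ)`, `p ≥ 2`. -/
theorem nonlinearity_uniform_monotonicity (p δ : ℝ) (hp : 2 ≤ p)
    (hδ : δ ∈ Set.Icc (0:ℝ) 1) (d : ℕ)
    (ϱ : ℝ → ℝ) (ϱstar : ℝ) (hϱstar : 0 < ϱstar)
    (hnonneg : ∀ t : ℝ, 0 < t → 0 ≤ ϱ t)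
    (hmono : ∀ t s : ℝ, s ≤ t → 0 < s →
      ϱstar * ((t + s) ^ δ * (1 + t + s) ^ (1 - δ)) ^ (p - 2) * (t - s) ≤
        ϱ t * t - ϱ s * s) :
    ∃ α > 0, ∀ x y : EuclideanSpace ℝ (Fin d),
      α * ‖x - y‖ ^ p ≤
        (inner ℝ ((if x = 0 then 0 else ϱ ‖x‖ • x) - (if y = 0 then 0 else ϱ ‖y‖ • y))
          (x - y) : ℝ) := by
  obtain ⟨hδ0, hδ1⟩ := hδ
  have hp0 : (0:ℝ) < p := by linarith
  have hpne : p ≠ 0 := ne_of_gt hp0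
  have hp2 : (0:ℝ) ≤ p - 2 := by linarith
  have h2r2 : (2:ℝ) ^ (2:ℝ) = 4 := by
    rw [Real.rpow_two]; norm_num
  set K : ℝ := (2:ℝ) ^ p with hK
  have hK4 : (4:ℝ) ≤ K := by
    have h := Real.rpow_le_rpow_of_exponent_le (by norm_num : (1:ℝ) ≤ 2) hp
    rw [h2r2] at h
    exact h
  have hKpos : (0:ℝ) < K := by linarith
  -- claim 1 : pointwise lower bound on ϱ
  have claim1 : ∀ t : ℝ, 0 < t → ϱstar / 2 * t ^ (p-2) ≤ ϱ t := by
    intro t ht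
    have h := hmono t (t/2) (by linarith) (by linarith)
    have hb : t ≤ (t + t/2) ^ δ * (1 + (t + t/2)) ^ (1-δ) := by
      have h1 : t ^ δ ≤ (t + t/2) ^ δ := Real.rpow_le_rpow ht.le (by linarith) hδ0
      have h2 : t ^ (1-δ) ≤ (1 + (t + t/2)) ^ (1-δ) :=
        Real.rpow_le_rpow ht.le (by linarith) (by linarith)
      calc t = t ^ δ * t ^ (1-δ) := by rw [← Real.rpow_add ht]; norm_num
        _ ≤ _ := mul_le_mul h1 h2 (Real.rpow_nonneg ht.le _)
              (Real.rpow_nonneg (by linarith) _)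
    have hb2 : t ^ (p-2) ≤ ((t + t/2) ^ δ * (1 + t + t/2) ^ (1-δ)) ^ (p-2) := by
      have := Real.rpow_le_rpow ht.le hb hp2
      have harw : (1 + (t + t/2)) = 1 + t + t/2 := by ring
      rwa [harw] at this
    have h5 : ϱstar * t ^ (p-2) * (t - t/2) ≤
        ϱstar * ((t + t/2) ^ δ * (1 + t + t/2) ^ (1-δ)) ^ (p-2) * (t - t/2) :=
      mul_le_mul_of_nonneg_right (mul_le_mul_of_nonneg_left hb2 hϱstar.le) (by linarith)
    have h7 := hnonneg (t/2) (by linarith)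
    have h6 : ϱstar * t ^ (p-2) * (t - t/2) ≤ ϱ t * t := by
      have := h5.trans h
      nlinarith
    have h8 : (ϱstar / 2 * t ^ (p-2)) * t ≤ ϱ t * t := by linarith [h6]
    exact le_of_mul_le_mul_right h8 ht
  -- claim 2 : simplified monotonicity
  have claim2 : ∀ t s : ℝ, 0 < s → s ≤ t →
      ϱstar * (t+s) ^ (p-2) * (t-s) ≤ ϱ t * t - ϱ s * s := by
    intro t s hs hst
    have h := hmono t s hst hs
    have hts : 0 < t + s := by linarith
    have hb : t + s ≤ (t+s) ^ δ * (1+t+s) ^ (1-δ) := by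
      have h1 : (t+s) ^ (1-δ) ≤ (1+t+s) ^ (1-δ) :=
        Real.rpow_le_rpow hts.le (by linarith) (by linarith)
      calc t+s = (t+s)^δ * (t+s)^(1-δ) := by rw [← Real.rpow_add hts]; norm_num
        _ ≤ _ := mul_le_mul_of_nonneg_left h1 (Real.rpow_nonneg hts.le _)
    have hb2 : (t+s) ^ (p-2) ≤ ((t+s) ^ δ * (1+t+s) ^ (1-δ)) ^ (p-2) :=
      Real.rpow_le_rpow hts.le hb hp2
    have h5 : ϱstar * (t+s) ^ (p-2) * (t-s) ≤
        ϱstar * ((t+s) ^ δ * (1+t+s) ^ (1-δ)) ^ (p-2) * (t-s) :=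
      mul_le_mul_of_nonneg_right (mul_le_mul_of_nonneg_left hb2 hϱstar.le) (by linarith)
    exact h5.trans h
  refine ⟨ϱstar / K, by positivity, ?_⟩
  have main : ∀ x y : EuclideanSpace ℝ (Fin d), ‖y‖ ≤ ‖x‖ →
      ϱstar / K * ‖x - y‖ ^ p ≤
        (inner ℝ ((if x = 0 then 0 else ϱ ‖x‖ • x) - (if y = 0 then 0 else ϱ ‖y‖ • y))
          (x - y) : ℝ) := by
    intro x y hle
    by_cases hy : y = 0
    · subst hy
      by_cases hx : x = 0
      · subst hx
        simp [Real.zero_rpow hpne]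
      · simp only [if_neg hx, eq_self_iff_true, if_true, if_pos, sub_zero]
        have ht : 0 < ‖x‖ := norm_pos_iff.mpr hx
        have e2 := claim1 ‖x‖ ht
        have hip : (inner ℝ (ϱ ‖x‖ • x) x : ℝ) = ϱ ‖x‖ * ‖x‖ ^ 2 := by
          rw [real_inner_smul_left, real_inner_self_eq_norm_sq]
        rw [hip]
        have hpow : ‖x‖ ^ p = ‖x‖ ^ (p-2) * ‖x‖ ^ 2 := by
          rw [← Real.rpow_natCast ‖x‖ 2, ← Real.rpow_add ht]; norm_num
        rw [hpow]
        have hd : ϱstar / K ≤ ϱstar / 2 := by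
          rw [div_le_div_iff₀ hKpos (by norm_num : (0:ℝ) < 2)]; nlinarith
        have hA : (0:ℝ) ≤ ‖x‖ ^ (p-2) * ‖x‖ ^ 2 := by positivity
        calc ϱstar / K * (‖x‖ ^ (p-2) * ‖x‖ ^ 2)
            ≤ ϱstar / 2 * (‖x‖ ^ (p-2) * ‖x‖ ^ 2) := mul_le_mul_of_nonneg_right hd hA
          _ = (ϱstar / 2 * ‖x‖ ^ (p-2)) * ‖x‖ ^ 2 := by ring
          _ ≤ ϱ ‖x‖ * ‖x‖ ^ 2 := mul_le_mul_of_nonneg_right e2 (sq_nonneg _)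
    · have hs : 0 < ‖y‖ := norm_pos_iff.mpr hy
      have ht : 0 < ‖x‖ := lt_of_lt_of_le hs hle
      have hx : x ≠ 0 := norm_pos_iff.mp ht
      by_cases hxy : x = y
      · subst hxy
        simp [Real.zero_rpow hpne]
      · simp only [if_neg hx, if_neg hy]
        set t := ‖x‖ with htdef
        set s := ‖y‖ with hsdef
        set c : ℝ := inner ℝ x y with hc
        have hexp : (inner ℝ (ϱ t • x - ϱ s • y) (x - y) : ℝ)
            = ϱ t * t ^ 2 + ϱ s * s ^ 2 - (ϱ t + ϱ s) * c := by
          have hyx : (inner ℝ y x : ℝ) = (inner ℝ x y : ℝ) := real_inner_comm x y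
          rw [hc, htdef, hsdef]
          simp only [inner_sub_left, inner_sub_right, real_inner_smul_left,
            real_inner_self_eq_norm_sq]
          rw [hyx]
          ring
        rw [hexp]
        have hcle : c ≤ t * s := real_inner_le_norm x y
        have hnsub : ‖x - y‖ ^ 2 = t ^ 2 - 2 * c + s ^ 2 := by
          rw [norm_sub_sq_real, ← hc]
        have hne : (0:ℝ) < ‖x - y‖ := by
          rw [norm_pos_iff]; exact sub_ne_zero.mpr hxy
        have hnle : ‖x - y‖ ≤ t + s := norm_sub_le x y
        have hM0 : (0:ℝ) ≤ (t+s) ^ (p-2) := Real.rpow_nonneg (by positivity) _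
        have hpow : ‖x - y‖ ^ p = ‖x - y‖ ^ (p-2) * ‖x - y‖ ^ 2 := by
          rw [← Real.rpow_natCast ‖x - y‖ 2, ← Real.rpow_add hne]; norm_num
        have hple : ‖x - y‖ ^ p ≤ (t+s) ^ (p-2) * ‖x - y‖ ^ 2 := by
          rw [hpow]
          exact mul_le_mul_of_nonneg_right
            (Real.rpow_le_rpow (norm_nonneg _) hnle hp2) (sq_nonneg _)
        have e1 := claim2 t s hs hle
        have e2 := claim1 t ht
        have eρs := hnonneg s hs
        have eρt := hnonneg t ht
        have htM : (t+s) ^ (p-2) / K * 4 ≤ t ^ (p-2) := by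
          have h1 : ((t+s)/2) ^ (p-2) ≤ t ^ (p-2) :=
            Real.rpow_le_rpow (by positivity) (by linarith) hp2
          have h2 : ((t+s)/2) ^ (p-2) = (t+s) ^ (p-2) / 2 ^ (p-2) :=
            Real.div_rpow (by positivity : (0:ℝ) ≤ t + s) (by norm_num : (0:ℝ) ≤ 2) (p-2)
          have h3 : (2:ℝ) ^ (p-2) = K / 4 := by
            rw [hK, Real.rpow_sub (by norm_num : (0:ℝ) < 2), h2r2]
          have h4 : (t+s) ^ (p-2) / K * 4 = ((t+s)/2) ^ (p-2) := by
            rw [h2, h3]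
            field_simp
          linarith [h1, h4.le, h4.ge]
        have h1' : ϱstar * (t+s) ^ (p-2) * (t-s) * (t-s) ≤ (ϱ t * t - ϱ s * s) * (t-s) :=
          mul_le_mul_of_nonneg_right e1 (by linarith)
        have e2' : ϱstar / 2 * ((t+s) ^ (p-2) / K * 4) ≤ ϱ t :=
          le_trans (mul_le_mul_of_nonneg_left htM (by positivity)) e2
        have h3' : (0:ℝ) ≤ ϱ s * (t*s - c) := mul_nonneg eρs (by linarith [hcle])
        calc ϱstar / K * ‖x - y‖ ^ p
            ≤ ϱstar / K * ((t+s) ^ (p-2) * ‖x - y‖ ^ 2) :=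
              mul_le_mul_of_nonneg_left hple (by positivity)
          _ = ϱstar / K * ((t+s) ^ (p-2) * (t^2 - 2*c + s^2)) := by rw [hnsub]
          _ ≤ ϱ t * t ^ 2 + ϱ s * s ^ 2 - (ϱ t + ϱ s) * c :=
              nonlinearity_aux_final (ϱ t) (ϱ s) ((t+s) ^ (p-2)) K t s c ϱstar
                hKpos (by linarith) hM0 hϱstar hle hcle h1' e2' h3'
  intro x y
  rcases le_total ‖y‖ ‖x‖ with h | h
  · exact main x y h
  · have h2 := main y x h
    have hsw : (inner ℝ ((if x = 0 then 0 else ϱ ‖x‖ • x) - (if y = 0 then 0 else ϱ ‖y‖ • y))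
          (x - y) : ℝ)
        = (inner ℝ ((if y = 0 then 0 else ϱ ‖y‖ • y) - (if x = 0 then 0 else ϱ ‖x‖ • x))
          (y - x) : ℝ) := by
      rw [← neg_sub ((if y = 0 then 0 else ϱ ‖y‖ • y) : EuclideanSpace ℝ (Fin d))
        ((if x = 0 then 0 else ϱ ‖x‖ • x)), ← neg_sub y x, inner_neg_neg]
    rw [hsw, norm_sub_rev]
    exact h2
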